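/- Let 0 < p ≤ 1, let N = ⌊d(1/p − 1)⌋, and let σ be a real number with σ < d + p(N + 1). Then there exists a constant C > 0, depending only on d, p and σ, such that for every r > 0, every (p, ∞, N)-atom a centered at 0 with radius r, and every ρ > 0, one has ∫_{|ξ|<ρ} |𝓕a(ξ)|^p |ξ|^{−σ} dξ ≤ C r^{p(N+1+d)−d} ρ^{d+p(N+1)−σ}. -/

import Mathlib

open MeasureTheory FourierTransform

noncomputable section

/-- A `(p, ∞, N)`-atom centered at `0` with radius `r > 0`. -/
def IsPAtom (d : ℕ) (p : ℝ) (N : ℕ) (r : ℝ) (a : EuclideanSpace ℝ (Fin d) → ℂ) : Prop :=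
  Measurable a ∧
  (∀ x, x ∉ Metric.closedBall (0 : EuclideanSpace ℝ (Fin d)) r → a x = 0) ∧
  (∀ x, ‖a x‖ ≤
    (volume (Metric.closedBall (0 : EuclideanSpace ℝ (Fin d)) r)).toReal ^ (-(1 / p))) ∧
  (∀ ℓ : Fin d → ℕ, (∑ i, ℓ i) ≤ N →
    ∫ y : EuclideanSpace ℝ (Fin d), a y * ∏ i, (y i : ℂ) ^ ℓ i = 0)

open Metric Finset
open scoped ENNReal
lemma exp_taylor_bound (n : ℕ) (hn : 0 < n) (t : ℝ) :
    ‖Complex.exp (t * Complex.I) - ∑ k ∈ Finset.range n, (t * Complex.I) ^ k / k.factorial‖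
      ≤ (n + 4) * |t| ^ n := by
  have habs : ‖(t * Complex.I : ℂ)‖ = |t| := by
    simp
  rcases le_or_gt (|t|) 1 with h1 | h1
  · have hb := Complex.exp_bound (x := t * Complex.I) (by rwa [habs]) hn
    rw [habs] at hb
    refine hb.trans ?_
    have h2 : ((n.succ : ℝ) * ((n.factorial : ℝ) * n)⁻¹) ≤ n + 4 := by
      have hfn : (1 : ℝ) ≤ (n.factorial : ℝ) * n := by
        have h3 : (1 : ℝ) ≤ (n.factorial : ℝ) := by exact_mod_cast n.factorial_pos
        have h4 : (1 : ℝ) ≤ (n : ℝ) := by exact_mod_cast hn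
        nlinarith
      calc ((n.succ : ℝ) * ((n.factorial : ℝ) * n)⁻¹) ≤ (n.succ : ℝ) * 1 := by
            apply mul_le_mul_of_nonneg_left _ (by positivity)
            exact inv_le_one_of_one_le₀ hfn
        _ ≤ n + 4 := by push_cast; linarith
    have h3 : (0:ℝ) ≤ |t| ^ n := by positivity
    calc |t| ^ n * ((n.succ : ℝ) * ((n.factorial : ℝ) * n)⁻¹) ≤ |t| ^ n * (n + 4) :=
          mul_le_mul_of_nonneg_left h2 h3
      _ = (n + 4) * |t| ^ n := by ring
  · have hpow : (1:ℝ) ≤ |t| ^ n := one_le_pow₀ h1.le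
    have hnorm_exp : ‖Complex.exp (t * Complex.I)‖ = 1 := by
      rw [Complex.norm_exp_ofReal_mul_I]
    calc ‖Complex.exp (t * Complex.I) - ∑ k ∈ Finset.range n, (t * Complex.I) ^ k / k.factorial‖
        ≤ ‖Complex.exp (t * Complex.I)‖ + ‖∑ k ∈ Finset.range n, (t * Complex.I) ^ k / k.factorial‖ :=
          norm_sub_le _ _
      _ ≤ 1 + ∑ k ∈ Finset.range n, |t| ^ n := by
          rw [hnorm_exp]
          gcongr
          refine (norm_sum_le _ _).trans (Finset.sum_le_sum fun k hk => ?_)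
          rw [norm_div, norm_pow, habs]
          have hk' : k ≤ n := (Finset.mem_range.1 hk).le
          have hfac : (1:ℝ) ≤ ‖(k.factorial : ℂ)‖ := by
            rw [Complex.norm_natCast]; exact_mod_cast k.factorial_pos
          calc |t| ^ k / ‖(k.factorial : ℂ)‖ ≤ |t| ^ k / 1 :=
                div_le_div_of_nonneg_left ?_ ?_ ?_ |>.trans (le_of_eq rfl)
            _ = |t| ^ k := div_one _
            _ ≤ |t| ^ n := pow_le_pow_right₀ h1.le hk'
          · positivity
          · norm_num
          · exact hfac
      _ = 1 + n * |t| ^ n := by rw [Finset.sum_const, Finset.card_range]; push_cast; ring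
      _ ≤ (n + 4) * |t| ^ n := by nlinarith
lemma lintegral_ball_rpow_le (d : ℕ) (hd : 0 < d) (α : ℝ) (hα : -(d:ℝ) < α) :
    ∃ C > 0, ∀ ρ : ℝ, 0 < ρ →
      ∫⁻ ξ in Metric.ball (0 : EuclideanSpace ℝ (Fin d)) ρ, ENNReal.ofReal (‖ξ‖ ^ α)
        ≤ ENNReal.ofReal (C * ρ ^ ((d:ℝ) + α)) := by
  haveI : Nontrivial (EuclideanSpace ℝ (Fin d)) :=
    Module.nontrivial_of_finrank_pos (R := ℝ)
      (by rw [finrank_euclideanSpace_fin]; exact hd)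
  set E := EuclideanSpace ℝ (Fin d)
  have hVfin : volume (ball (0:E) 1) ≠ ⊤ := measure_ball_lt_top.ne
  have hVpos : 0 < (volume (ball (0:E) 1)).toReal :=
    ENNReal.toReal_pos (measure_ball_pos _ _ one_pos).ne' hVfin
  set V : ℝ := (volume (ball (0:E) 1)).toReal with hV
  set q : ℝ := (2:ℝ) ^ (-(((d:ℝ)) + α)) with hq
  have hq0 : 0 < q := Real.rpow_pos_of_pos two_pos _
  have hq1 : q < 1 := Real.rpow_lt_one_of_one_lt_of_neg one_lt_two (by linarith)
  set K : ℝ := V * (2:ℝ) ^ (|α| - α) with hK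
  have hKpos : 0 < K := mul_pos hVpos (Real.rpow_pos_of_pos two_pos _)
  refine ⟨K * (1 - q)⁻¹, mul_pos hKpos (inv_pos.2 (by linarith)), fun ρ hρ => ?_⟩
  set A : ℕ → Set E := fun n => ball (0:E) (ρ / 2 ^ n) \ ball (0:E) (ρ / 2 ^ (n+1)) with hA
  have hsub : ball (0:E) ρ \ {0} ⊆ ⋃ n, A n := by
    intro ξ hξ
    have hξ0 : 0 < ‖ξ‖ := by
      exact norm_pos_iff.2 hξ.2
    have hξρ : ‖ξ‖ < ρ := by simpa using hξ.1
    have hex : ∃ n : ℕ, ρ / 2 ^ (n+1) ≤ ‖ξ‖ := by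
      obtain ⟨m, hm⟩ := pow_unbounded_of_one_lt (ρ / ‖ξ‖) (one_lt_two (α := ℝ))
      refine ⟨m, ?_⟩
      rw [div_le_iff₀ (by positivity)]
      rw [div_lt_iff₀ hξ0] at hm
      have h2m : (2:ℝ) ^ m ≤ 2 ^ (m+1) := by
        apply pow_le_pow_right₀ (by norm_num) (Nat.le_succ m)
      nlinarith
    refine Set.mem_iUnion.2 ⟨Nat.find hex, ?_, ?_⟩
    · rw [mem_ball_zero_iff]
      rcases Nat.eq_zero_or_pos (Nat.find hex) with h0 | h0
      · rw [h0]; simpa using hξρ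
      · obtain ⟨m, hm⟩ := Nat.exists_eq_succ_of_ne_zero h0.ne'
        have hmin := Nat.find_min hex (by omega : m < Nat.find hex)
        push_neg at hmin
        rw [hm]
        exact hmin
    · exact fun hcon => (not_lt.2 (Nat.find_spec hex)) (mem_ball_zero_iff.1 hcon)
  have hzero : volume ({(0:E)} : Set E) = 0 := measure_singleton _
  have hcongr : ∫⁻ ξ in ball (0:E) ρ, ENNReal.ofReal (‖ξ‖ ^ α)
      = ∫⁻ ξ in ball (0:E) ρ \ {0}, ENNReal.ofReal (‖ξ‖ ^ α) := by
    refine (setLIntegral_congr ?_).symm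
    exact (diff_ae_eq_self.2 (measure_inter_null_of_null_right _ hzero))
  rw [hcongr]
  have hterm : ∀ n : ℕ, ∫⁻ ξ in A n, ENNReal.ofReal (‖ξ‖ ^ α)
      ≤ ENNReal.ofReal (K * ρ ^ ((d:ℝ) + α) * q ^ n) := by
    intro n
    have hb2 : (0:ℝ) < ρ / 2 ^ (n+1) := by positivity
    have hb1 : (0:ℝ) < ρ / 2 ^ n := by positivity
    have hpt : ∀ ξ ∈ A n, ENNReal.ofReal (‖ξ‖ ^ α)
        ≤ ENNReal.ofReal ((2:ℝ) ^ |α| * (ρ / 2 ^ (n+1)) ^ α) := by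
      intro ξ hξ
      apply ENNReal.ofReal_le_ofReal
      have hlow : ρ / 2 ^ (n+1) ≤ ‖ξ‖ := by
        have := hξ.2; rw [mem_ball_zero_iff] at this; exact not_lt.1 this
      have hup : ‖ξ‖ < ρ / 2 ^ n := by
        have := hξ.1; rwa [mem_ball_zero_iff] at this
      rcases le_or_gt 0 α with hα0 | hα0
      · have h1 : ‖ξ‖ ^ α ≤ (ρ / 2 ^ n) ^ α :=
          Real.rpow_le_rpow (norm_nonneg _) hup.le hα0
        have h2 : (ρ / 2 ^ n : ℝ) = 2 * (ρ / 2 ^ (n+1)) := by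
          field_simp; ring
        rw [h2, Real.mul_rpow two_pos.le hb2.le] at h1
        refine h1.trans ?_
        apply mul_le_mul_of_nonneg_right _ (Real.rpow_nonneg hb2.le _)
        exact Real.rpow_le_rpow_of_exponent_le one_le_two (le_abs_self α)
      · have h1 : ‖ξ‖ ^ α ≤ (ρ / 2 ^ (n+1)) ^ α :=
          Real.rpow_le_rpow_of_nonpos hb2 hlow hα0.le
        refine h1.trans ?_
        nth_rewrite 1 [show (ρ / 2 ^ (n+1)) ^ α = 1 * (ρ / 2 ^ (n+1)) ^ α by ring]
        apply mul_le_mul_of_nonneg_right _ (Real.rpow_nonneg hb2.le _)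
        exact Real.one_le_rpow one_le_two (abs_nonneg α)
    calc ∫⁻ ξ in A n, ENNReal.ofReal (‖ξ‖ ^ α)
        ≤ ∫⁻ _ in A n, ENNReal.ofReal ((2:ℝ) ^ |α| * (ρ / 2 ^ (n+1)) ^ α) :=
          setLIntegral_mono measurable_const hpt
      _ = ENNReal.ofReal ((2:ℝ) ^ |α| * (ρ / 2 ^ (n+1)) ^ α) * volume (A n) := by
          rw [setLIntegral_const]
      _ ≤ ENNReal.ofReal ((2:ℝ) ^ |α| * (ρ / 2 ^ (n+1)) ^ α) *
            (ENNReal.ofReal ((ρ / 2 ^ n) ^ d) * volume (ball (0:E) 1)) := by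
          apply mul_le_mul_right
          calc volume (A n) ≤ volume (ball (0:E) (ρ / 2 ^ n)) :=
                measure_mono Set.diff_subset
            _ = ENNReal.ofReal ((ρ / 2 ^ n) ^ Module.finrank ℝ E) * volume (ball (0:E) 1) :=
                Measure.addHaar_ball _ _ hb1.le
            _ = ENNReal.ofReal ((ρ / 2 ^ n) ^ d) * volume (ball (0:E) 1) := by
                rw [show Module.finrank ℝ E = d from finrank_euclideanSpace_fin]
      _ = ENNReal.ofReal ((2:ℝ) ^ |α| * (ρ / 2 ^ (n+1)) ^ α * ((ρ / 2 ^ n) ^ d * V)) := by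
          rw [← ENNReal.ofReal_toReal hVfin, ← hV,
            ← ENNReal.ofReal_mul (by positivity), ← ENNReal.ofReal_mul (by positivity)]
      _ ≤ ENNReal.ofReal (K * ρ ^ ((d:ℝ) + α) * q ^ n) := by
          apply ENNReal.ofReal_le_ofReal
          apply le_of_eq
          have e1 : ((ρ / 2 ^ (n+1) : ℝ)) ^ α = ρ ^ α * ((2:ℝ) ^ (-(((n:ℝ))+1) * α)) := by
            rw [Real.div_rpow hρ.le (by positivity)]
            rw [show ((2:ℝ) ^ (n+1) : ℝ) = (2:ℝ) ^ (((n:ℝ))+1) by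
              rw [← Real.rpow_natCast 2 (n+1)]; push_cast; ring_nf]
            rw [← Real.rpow_mul two_pos.le, div_eq_mul_inv, ← Real.rpow_neg two_pos.le]
            ring_nf
          have e2 : ((ρ / 2 ^ n : ℝ)) ^ (d:ℕ) = ρ ^ ((d:ℝ)) * ((2:ℝ) ^ (-((n:ℝ)) * d)) := by
            rw [← Real.rpow_natCast (ρ / 2 ^ n) d, Real.div_rpow hρ.le (by positivity)]
            rw [show ((2:ℝ) ^ n : ℝ) = (2:ℝ) ^ ((n:ℝ)) from (Real.rpow_natCast 2 n).symm]
            rw [← Real.rpow_mul two_pos.le, div_eq_mul_inv, ← Real.rpow_neg two_pos.le]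
            ring_nf
          rw [e1, e2, hK, hq,
            ← Real.rpow_natCast ((2:ℝ) ^ (-((d:ℝ) + α))) n, ← Real.rpow_mul two_pos.le,
            Real.rpow_add hρ, Real.rpow_sub two_pos,
            show (-((d:ℝ) + α)) * (n:ℝ) = (-(n:ℝ) * (d:ℝ)) + (-(n:ℝ) * α) by ring,
            Real.rpow_add two_pos,
            show (-(((n:ℝ)) + 1)) * α = (-(n:ℝ) * α) + (-α) by ring,
            Real.rpow_add two_pos, Real.rpow_neg two_pos.le]
          ring
  calc ∫⁻ ξ in ball (0:E) ρ \ {0}, ENNReal.ofReal (‖ξ‖ ^ α)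
      ≤ ∫⁻ ξ in ⋃ n, A n, ENNReal.ofReal (‖ξ‖ ^ α) := lintegral_mono_set hsub
    _ ≤ ∑' n, ∫⁻ ξ in A n, ENNReal.ofReal (‖ξ‖ ^ α) := lintegral_iUnion_le _ _
    _ ≤ ∑' n, ENNReal.ofReal (K * ρ ^ ((d:ℝ) + α) * q ^ n) := ENNReal.tsum_le_tsum hterm
    _ = ENNReal.ofReal (K * ρ ^ ((d:ℝ) + α)) * ∑' n, (ENNReal.ofReal q) ^ n := by
        rw [← ENNReal.tsum_mul_left]
        congr 1; ext n
        rw [← ENNReal.ofReal_pow hq0.le, ← ENNReal.ofReal_mul (by positivity)]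
    _ = ENNReal.ofReal (K * ρ ^ ((d:ℝ) + α)) * (1 - ENNReal.ofReal q)⁻¹ := by
        rw [ENNReal.tsum_geometric]
    _ ≤ ENNReal.ofReal (K * (1 - q)⁻¹ * ρ ^ ((d:ℝ) + α)) := by
        rw [show (1:ℝ≥0∞) - ENNReal.ofReal q = ENNReal.ofReal (1 - q) by
          rw [← ENNReal.ofReal_one, ← ENNReal.ofReal_sub _ hq0.le]]
        rw [← ENNReal.ofReal_inv_of_pos (by linarith : (0:ℝ) < 1 - q)]
        rw [← ENNReal.ofReal_mul (by positivity)]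
        apply ENNReal.ofReal_le_ofReal
        apply le_of_eq; ring
variable {d : ℕ}

lemma integrable_of_ball_support {r M : ℝ} {g : EuclideanSpace ℝ (Fin d) → ℂ}
    (hg : AEStronglyMeasurable g volume)
    (h0 : ∀ x ∉ Metric.closedBall (0 : EuclideanSpace ℝ (Fin d)) r, g x = 0)
    (hM : ∀ x ∈ Metric.closedBall (0 : EuclideanSpace ℝ (Fin d)) r, ‖g x‖ ≤ M) :
    Integrable g := by
  have hind : g = (Metric.closedBall (0 : EuclideanSpace ℝ (Fin d)) r).indicator g := by
    funext x
    by_cases hx : x ∈ Metric.closedBall (0 : EuclideanSpace ℝ (Fin d)) r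
    · rw [Set.indicator_of_mem hx]
    · rw [Set.indicator_of_notMem hx, h0 x hx]
  rw [hind]
  apply IntegrableOn.integrable_indicator _ measurableSet_closedBall
  apply Measure.integrableOn_of_bounded measure_closedBall_lt_top.ne hg (M := M)
  exact (ae_restrict_iff' measurableSet_closedBall).2 (ae_of_all _ hM)

lemma poly_integrable {p : ℝ} {N : ℕ} {r : ℝ} {a : EuclideanSpace ℝ (Fin d) → ℂ}
    (ha : IsPAtom d p N r a) (m : Fin d → ℕ) :
    Integrable (fun y : EuclideanSpace ℝ (Fin d) => a y * ∏ i, (y i : ℂ) ^ m i) := by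
  obtain ⟨hmeas, hsupp, hbd, -⟩ := ha
  have hcont : ContinuousOn (fun y : EuclideanSpace ℝ (Fin d) => ∏ i, (y i : ℂ) ^ m i)
      (Metric.closedBall 0 r) := by
    apply Continuous.continuousOn
    exact continuous_finset_prod _ fun i _ =>
      ((Complex.continuous_ofReal.comp (by fun_prop : Continuous fun y : EuclideanSpace ℝ (Fin d) => y i)).pow _)
  obtain ⟨B, hB⟩ := (isCompact_closedBall (0 : EuclideanSpace ℝ (Fin d)) r).exists_bound_of_continuousOn hcont
  set M := (volume (Metric.closedBall (0 : EuclideanSpace ℝ (Fin d)) r)).toReal ^ (-(1/p)) with hMdef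
  apply integrable_of_ball_support (M := M * B)
  · exact (hmeas.mul (by fun_prop)).aestronglyMeasurable
  · intro x hx; rw [hsupp x hx, zero_mul]
  · intro x hx
    rw [norm_mul]
    have h1 := hbd x
    have h2 := hB x hx
    have h3 : (0:ℝ) ≤ ‖a x‖ := norm_nonneg _
    have h4 : (0:ℝ) ≤ M := by rw [hMdef]; positivity
    exact mul_le_mul h1 h2 (norm_nonneg _) h4

lemma moment_vanish {p : ℝ} {N : ℕ} {r : ℝ} {a : EuclideanSpace ℝ (Fin d) → ℂ}
    (ha : IsPAtom d p N r a) (ξ : EuclideanSpace ℝ (Fin d)) {k : ℕ} (hk : k ≤ N) :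
    ∫ y : EuclideanSpace ℝ (Fin d), a y * ((inner ℝ y ξ : ℝ) : ℂ) ^ k = 0 := by
  have hexp : ∀ y : EuclideanSpace ℝ (Fin d),
      a y * ((inner ℝ y ξ : ℝ) : ℂ) ^ k
        = ∑ m ∈ Finset.piAntidiag Finset.univ k,
            ((Nat.multinomial Finset.univ m : ℂ) * ∏ i, (ξ i : ℂ) ^ m i)
              * (a y * ∏ i, (y i : ℂ) ^ m i) := by
    intro y
    have hinner : ((inner ℝ y ξ : ℝ) : ℂ) = ∑ i, (y i : ℂ) * (ξ i : ℂ) := by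
      rw [show (inner ℝ y ξ : ℝ) = ∑ i, y i * ξ i by simp [PiLp.inner_apply, mul_comm]]
      push_cast
      rfl
    rw [hinner, Finset.sum_pow_eq_sum_piAntidiag, Finset.mul_sum]
    apply Finset.sum_congr rfl
    intro m _
    rw [show ∏ i, ((y i : ℂ) * (ξ i : ℂ)) ^ m i = (∏ i, (y i : ℂ) ^ m i) * ∏ i, (ξ i : ℂ) ^ m i by
      rw [← Finset.prod_mul_distrib]; exact Finset.prod_congr rfl fun i _ => mul_pow _ _ _]
    ring
  simp_rw [hexp]
  rw [integral_finset_sum _ fun m _ => (poly_integrable ha m).const_mul _]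
  apply Finset.sum_eq_zero
  intro m hm
  rw [integral_const_mul, ha.2.2.2 m ?_, mul_zero]
  rw [Finset.mem_piAntidiag] at hm
  exact le_trans (le_of_eq hm.1) hk
lemma atom_mul_integrable {p : ℝ} {N : ℕ} {r : ℝ} {a : EuclideanSpace ℝ (Fin d) → ℂ}
    (ha : IsPAtom d p N r a) {g : EuclideanSpace ℝ (Fin d) → ℂ} (hg : Continuous g) :
    Integrable (fun y => a y * g y) := by
  obtain ⟨hmeas, hsupp, hbd, -⟩ := ha
  obtain ⟨B, hB⟩ := (isCompact_closedBall (0 : EuclideanSpace ℝ (Fin d)) r).exists_bound_of_continuousOn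
    hg.continuousOn
  set M := (volume (Metric.closedBall (0 : EuclideanSpace ℝ (Fin d)) r)).toReal ^ (-(1/p)) with hMdef
  apply integrable_of_ball_support (M := M * B)
  · exact (hmeas.mul hg.measurable).aestronglyMeasurable
  · intro x hx; rw [hsupp x hx, zero_mul]
  · intro x hx
    rw [norm_mul]
    have h4 : (0:ℝ) ≤ M := by rw [hMdef]; positivity
    exact mul_le_mul (hbd x) (hB x hx) (norm_nonneg _) h4

lemma ft_bound {p : ℝ} {N : ℕ} {r : ℝ} {a : EuclideanSpace ℝ (Fin d) → ℂ}
    (hp0 : 0 < p) (hr : 0 < r) (ha : IsPAtom d p N r a) (ξ : EuclideanSpace ℝ (Fin d)) :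
    ‖𝓕 a ξ‖ ≤ ((N:ℝ) + 5) * (2*Real.pi) ^ (N+1) *
      (volume (Metric.closedBall (0 : EuclideanSpace ℝ (Fin d)) r)).toReal ^ (1 - 1/p) *
      (r ^ (N+1) * ‖ξ‖ ^ (N+1)) := by
  set n := N + 1 with hn
  set t : EuclideanSpace ℝ (Fin d) → ℝ := fun y => -2 * Real.pi * (inner ℝ y ξ : ℝ) with ht
  set P : EuclideanSpace ℝ (Fin d) → ℂ := fun y => ∑ k ∈ Finset.range n, ((t y : ℂ) * Complex.I) ^ k / k.factorial with hP
  have hexp_cont : Continuous fun y : EuclideanSpace ℝ (Fin d) => Complex.exp ((t y : ℂ) * Complex.I) := by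
    apply Complex.continuous_exp.comp
    apply Continuous.mul _ continuous_const
    exact Complex.continuous_ofReal.comp
      (continuous_const.mul ((continuous_id.inner continuous_const)))
  have hP_cont : Continuous P := by
    apply continuous_finset_sum
    intro k _
    apply Continuous.div_const
    apply Continuous.pow
    apply Continuous.mul _ continuous_const
    exact Complex.continuous_ofReal.comp
      (continuous_const.mul ((continuous_id.inner continuous_const)))
  have hint_exp : Integrable (fun y : EuclideanSpace ℝ (Fin d) => a y * Complex.exp ((t y : ℂ) * Complex.I)) :=
    atom_mul_integrable ha hexp_cont
  have hint_P : Integrable (fun y : EuclideanSpace ℝ (Fin d) => a y * P y) := atom_mul_integrable ha hP_cont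
  have hft : 𝓕 a ξ = ∫ y : EuclideanSpace ℝ (Fin d), a y * Complex.exp ((t y : ℂ) * Complex.I) := by
    rw [Real.fourier_eq']
    congr 1 with y
    rw [smul_eq_mul, ht]
    push_cast
    ring
  have hP0 : ∫ y : EuclideanSpace ℝ (Fin d), a y * P y = 0 := by
    have hptw : ∀ y : EuclideanSpace ℝ (Fin d), a y * P y
        = ∑ k ∈ Finset.range n, ((((-2 * Real.pi : ℝ) : ℂ)) ^ k * Complex.I ^ k / k.factorial)
            * (a y * ((inner ℝ y ξ : ℝ) : ℂ) ^ k) := by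
      intro y
      rw [hP, Finset.mul_sum]
      apply Finset.sum_congr rfl
      intro k _
      have : ((t y : ℝ) : ℂ) = (((-2 * Real.pi : ℝ) : ℂ)) * ((inner ℝ y ξ : ℝ) : ℂ) := by
        rw [ht]; push_cast; ring
      rw [this]
      rw [mul_pow, mul_pow]
      ring
    simp_rw [hptw]
    rw [integral_finset_sum _ (fun k _ => Integrable.const_mul (atom_mul_integrable ha (by
      exact (Complex.continuous_ofReal.comp ((continuous_id.inner continuous_const))).pow k)) _)]
    apply Finset.sum_eq_zero
    intro k hk
    rw [integral_const_mul, moment_vanish ha ξ (by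
      have := Finset.mem_range.1 hk; omega), mul_zero]
  have hsplit : 𝓕 a ξ = ∫ y : EuclideanSpace ℝ (Fin d), (Complex.exp ((t y : ℂ) * Complex.I) - P y) * a y := by
    rw [hft, ← sub_zero (∫ y : EuclideanSpace ℝ (Fin d), a y * Complex.exp ((t y : ℂ) * Complex.I)), ← hP0,
      ← integral_sub hint_exp hint_P]
    congr 1 with y
    ring
  have hvfin : volume (Metric.closedBall (0 : EuclideanSpace ℝ (Fin d)) r) ≠ ⊤ := measure_closedBall_lt_top.ne
  have hvpos : 0 < (volume (Metric.closedBall (0 : EuclideanSpace ℝ (Fin d)) r)).toReal :=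
    ENNReal.toReal_pos (measure_closedBall_pos _ _ hr).ne' hvfin
  set v : ℝ := (volume (Metric.closedBall (0 : EuclideanSpace ℝ (Fin d)) r)).toReal with hv
  set M : ℝ := v ^ (-(1/p)) with hM
  have hMpos : 0 < M := Real.rpow_pos_of_pos hvpos _
  set D : ℝ := ((n:ℝ) + 4) * (2 * Real.pi * (r * ‖ξ‖)) ^ n * M with hD
  have hDpos : 0 ≤ D := by
    rw [hD]
    positivity
  rw [hsplit]
  have hbound : ∀ y : EuclideanSpace ℝ (Fin d), ‖(Complex.exp ((t y : ℂ) * Complex.I) - P y) * a y‖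
      ≤ (Metric.closedBall (0 : EuclideanSpace ℝ (Fin d)) r).indicator (fun _ => D) y := by
    intro y
    by_cases hy : y ∈ Metric.closedBall (0 : EuclideanSpace ℝ (Fin d)) r
    · rw [Set.indicator_of_mem hy, norm_mul]
      have h1 : ‖Complex.exp ((t y : ℂ) * Complex.I) - P y‖ ≤ ((n:ℝ) + 4) * |t y| ^ n :=
        exp_taylor_bound n (by omega) (t y)
      have hty : |t y| ≤ 2 * Real.pi * (r * ‖ξ‖) := by
        rw [ht]
        calc |(-2 * Real.pi) * (inner ℝ y ξ : ℝ)|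
            = 2 * Real.pi * |(inner ℝ y ξ : ℝ)| := by
              rw [abs_mul, abs_mul, abs_of_pos Real.pi_pos, show |(-2:ℝ)| = 2 by norm_num]
          _ ≤ 2 * Real.pi * (‖y‖ * ‖ξ‖) := by
              apply mul_le_mul_of_nonneg_left (abs_real_inner_le_norm y ξ) (by positivity)
          _ ≤ 2 * Real.pi * (r * ‖ξ‖) := by
              have hyr : ‖y‖ ≤ r := mem_closedBall_zero_iff.1 hy
              apply mul_le_mul_of_nonneg_left _ (by positivity)
              exact mul_le_mul_of_nonneg_right hyr (norm_nonneg _)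
      have h3 : |t y| ^ n ≤ (2 * Real.pi * (r * ‖ξ‖)) ^ n :=
        pow_le_pow_left₀ (abs_nonneg _) hty n
      have hbd : ‖a y‖ ≤ M := by rw [hM, hv]; exact ha.2.2.1 y
      calc ‖Complex.exp ((t y : ℂ) * Complex.I) - P y‖ * ‖a y‖
          ≤ (((n:ℝ) + 4) * |t y| ^ n) * M := by
            apply mul_le_mul h1 hbd (norm_nonneg _) (by positivity)
        _ ≤ D := by
            rw [hD]
            apply mul_le_mul_of_nonneg_right _ hMpos.le
            apply mul_le_mul_of_nonneg_left h3 (by positivity)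
    · rw [Set.indicator_of_notMem hy, (ha.2.1) y hy, mul_zero, norm_zero]
  have hgint : Integrable ((Metric.closedBall (0 : EuclideanSpace ℝ (Fin d)) r).indicator (fun _ => D)) :=
    (integrableOn_const measure_closedBall_lt_top.ne).integrable_indicator
      measurableSet_closedBall
  calc ‖∫ y : EuclideanSpace ℝ (Fin d), (Complex.exp ((t y : ℂ) * Complex.I) - P y) * a y‖
      ≤ ∫ y : EuclideanSpace ℝ (Fin d), (Metric.closedBall (0 : EuclideanSpace ℝ (Fin d)) r).indicator (fun _ => D) y :=
        norm_integral_le_of_norm_le hgint (Filter.Eventually.of_forall hbound)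
    _ = v * D := by
        rw [integral_indicator_const _ measurableSet_closedBall, smul_eq_mul, measureReal_def, ← hv]
    _ = ((N:ℝ) + 5) * (2*Real.pi) ^ n * v ^ (1 - 1/p) * (r ^ n * ‖ξ‖ ^ n) := by
        have hv1 : v ^ (1 - 1/p) = v * v ^ (-(1/p)) := by
          rw [show (1 - 1/p) = 1 + -(1/p) by ring, Real.rpow_add hvpos, Real.rpow_one]
        rw [hv1, hD, hM]
        have hn5 : ((n:ℝ) + 4) = ((N:ℝ) + 5) := by rw [hn]; push_cast; ring
        rw [hn5, mul_pow, mul_pow]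
        ring
/-- Low-frequency estimate (the term `S₁`): for `σ < d + p(N+1)`,
`∫_{|ξ|<ρ} |𝓕a(ξ)|^p |ξ|^{-σ} dξ ≤ C r^{p(N+1+d)-d} ρ^{d+p(N+1)-σ}`. -/
theorem hardy_low_frequency_estimate (d : ℕ) (p σ : ℝ) (hp0 : 0 < p) (hp1 : p ≤ 1)
    (N : ℕ) (hN : N = ⌊(d : ℝ) * (1 / p - 1)⌋₊)
    (hσ : σ < d + p * (N + 1)) :
    ∃ C > 0, ∀ (r : ℝ) (a : EuclideanSpace ℝ (Fin d) → ℂ) (ρ : ℝ),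
      0 < r → IsPAtom d p N r a → 0 < ρ →
      ∫⁻ ξ in Metric.ball (0 : EuclideanSpace ℝ (Fin d)) ρ,
          ENNReal.ofReal (‖𝓕 a ξ‖ ^ p * ‖ξ‖ ^ (-σ)) ≤
        ENNReal.ofReal (C * r ^ (p * ((N : ℝ) + 1 + d) - d) *
          ρ ^ ((d : ℝ) + p * (N + 1) - σ)) := by
  rcases Nat.eq_zero_or_pos d with hd0 | hd
  · subst hd0
    refine ⟨1, one_pos, fun r a ρ hr ha hρ => ?_⟩
    have hzero : ∀ ξ : EuclideanSpace ℝ (Fin 0), 𝓕 a ξ = 0 := by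
      intro ξ
      have h0 : ∫ y : EuclideanSpace ℝ (Fin 0), a y = 0 := by
        have h := ha.2.2.2 (fun _ => 0) (by simp)
        simpa using h
      rw [Real.fourier_eq]
      rw [show (fun v : EuclideanSpace ℝ (Fin 0) => (𝐞 (-(inner ℝ v ξ : ℝ)) : Circle) • a v)
          = fun v : EuclideanSpace ℝ (Fin 0) => a v from ?_]
      · exact h0
      · funext v
        have hv : (inner ℝ v ξ : ℝ) = 0 := by
          rw [Subsingleton.elim v (0 : EuclideanSpace ℝ (Fin 0)), inner_zero_left]
        rw [hv, neg_zero]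
        simp
    have hLHS : ∫⁻ ξ in Metric.ball (0 : EuclideanSpace ℝ (Fin 0)) ρ,
        ENNReal.ofReal (‖𝓕 a ξ‖ ^ p * ‖ξ‖ ^ (-σ)) = 0 := by
      have : ∀ ξ : EuclideanSpace ℝ (Fin 0),
          ENNReal.ofReal (‖𝓕 a ξ‖ ^ p * ‖ξ‖ ^ (-σ)) = 0 := by
        intro ξ
        rw [hzero ξ, norm_zero, Real.zero_rpow hp0.ne', zero_mul, ENNReal.ofReal_zero]
      simp_rw [this]
      simp
    rw [hLHS]
    exact zero_le
  · set α : ℝ := p * ((N : ℝ) + 1) - σ with hα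
    obtain ⟨C₂, hC₂pos, hC₂⟩ := lintegral_ball_rpow_le d hd α (by rw [hα]; push_cast; linarith)
    have hVfin : volume (Metric.ball (0 : EuclideanSpace ℝ (Fin d)) 1) ≠ ⊤ :=
      measure_ball_lt_top.ne
    set V : ℝ := (volume (Metric.ball (0 : EuclideanSpace ℝ (Fin d)) 1)).toReal with hV
    have hVpos : 0 < V := ENNReal.toReal_pos (measure_ball_pos _ _ one_pos).ne' hVfin
    set K : ℝ := ((N:ℝ) + 5) * (2 * Real.pi) ^ (N + 1) * V ^ (1 - 1/p) with hK
    have hKpos : 0 < K := by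
      rw [hK]
      have h2 : (0:ℝ) < 2 * Real.pi := by positivity
      positivity
    refine ⟨K ^ p * C₂, by positivity, fun r a ρ hr ha hρ => ?_⟩
    set β : ℝ := ((N : ℝ) + 1) + (d : ℝ) * (1 - 1/p) with hβ
    have hvol : (volume (Metric.closedBall (0 : EuclideanSpace ℝ (Fin d)) r)).toReal
        = r ^ (d : ℕ) * V := by
      rw [Measure.addHaar_closedBall _ _ hr.le, ENNReal.toReal_mul,
        ENNReal.toReal_ofReal (by positivity),
        show Module.finrank ℝ (EuclideanSpace ℝ (Fin d)) = d from finrank_euclideanSpace_fin, hV]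
    have hFT : ∀ ξ : EuclideanSpace ℝ (Fin d), ‖𝓕 a ξ‖ ≤ K * r ^ β * ‖ξ‖ ^ (N + 1) := by
      intro ξ
      refine (ft_bound hp0 hr ha ξ).trans (le_of_eq ?_)
      rw [hvol, Real.mul_rpow (by positivity) hVpos.le,
        ← Real.rpow_natCast r d, ← Real.rpow_mul hr.le, hK, hβ,
        show r ^ (N+1) = r ^ (((N:ℕ) + 1 : ℕ) : ℝ) from (Real.rpow_natCast r (N+1)).symm,
        show (((N:ℕ) + 1 : ℕ) : ℝ) = (N:ℝ) + 1 by push_cast; ring]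
      rw [Real.rpow_add hr ((N:ℝ)+1) ((d:ℝ) * (1 - 1/p))]
      ring
    have hptw : ∀ ξ : EuclideanSpace ℝ (Fin d),
        ENNReal.ofReal (‖𝓕 a ξ‖ ^ p * ‖ξ‖ ^ (-σ))
          ≤ ENNReal.ofReal ((K * r ^ β) ^ p * ‖ξ‖ ^ α) := by
      intro ξ
      by_cases hξ : ξ = 0
      · have h00 : ‖𝓕 a ξ‖ = 0 := by
          refine le_antisymm ?_ (norm_nonneg _)
          have := hFT ξ
          rw [hξ] at this ⊢
          simpa using this
        rw [h00, Real.zero_rpow hp0.ne', zero_mul, ENNReal.ofReal_zero]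
        exact zero_le
      · have hξ0 : 0 < ‖ξ‖ := norm_pos_iff.2 hξ
        apply ENNReal.ofReal_le_ofReal
        have h1 : ‖𝓕 a ξ‖ ^ p ≤ (K * r ^ β * ‖ξ‖ ^ (N+1)) ^ p :=
          Real.rpow_le_rpow (norm_nonneg _) (hFT ξ) hp0.le
        have h2 : (K * r ^ β * ‖ξ‖ ^ (N+1)) ^ p
            = (K * r ^ β) ^ p * ‖ξ‖ ^ (p * ((N:ℝ) + 1)) := by
          rw [Real.mul_rpow (by positivity) (by positivity),
            ← Real.rpow_natCast ‖ξ‖ (N+1), ← Real.rpow_mul (norm_nonneg _)]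
          congr 2
          push_cast
          ring
        calc ‖𝓕 a ξ‖ ^ p * ‖ξ‖ ^ (-σ)
            ≤ (K * r ^ β) ^ p * ‖ξ‖ ^ (p * ((N:ℝ) + 1)) * ‖ξ‖ ^ (-σ) := by
              apply mul_le_mul_of_nonneg_right (h1.trans h2.le)
                (Real.rpow_nonneg (norm_nonneg _) _)
          _ = (K * r ^ β) ^ p * ‖ξ‖ ^ α := by
              rw [mul_assoc, ← Real.rpow_add hξ0, hα, ← sub_eq_add_neg]
    calc ∫⁻ ξ in Metric.ball (0 : EuclideanSpace ℝ (Fin d)) ρ,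
          ENNReal.ofReal (‖𝓕 a ξ‖ ^ p * ‖ξ‖ ^ (-σ))
        ≤ ∫⁻ ξ in Metric.ball (0 : EuclideanSpace ℝ (Fin d)) ρ,
            ENNReal.ofReal ((K * r ^ β) ^ p * ‖ξ‖ ^ α) := lintegral_mono fun ξ => hptw ξ
      _ = ENNReal.ofReal ((K * r ^ β) ^ p) *
            ∫⁻ ξ in Metric.ball (0 : EuclideanSpace ℝ (Fin d)) ρ, ENNReal.ofReal (‖ξ‖ ^ α) := by
          simp_rw [ENNReal.ofReal_mul (by positivity : (0:ℝ) ≤ (K * r ^ β) ^ p)]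
          rw [lintegral_const_mul' _ _ ENNReal.ofReal_ne_top]
      _ ≤ ENNReal.ofReal ((K * r ^ β) ^ p) * ENNReal.ofReal (C₂ * ρ ^ ((d:ℝ) + α)) :=
          mul_le_mul_right (hC₂ ρ hρ) _
      _ ≤ ENNReal.ofReal (K ^ p * C₂ * r ^ (p * ((N : ℝ) + 1 + d) - d) *
            ρ ^ ((d : ℝ) + p * (N + 1) - σ)) := by
          rw [← ENNReal.ofReal_mul (by positivity)]
          apply ENNReal.ofReal_le_ofReal
          apply le_of_eq
          rw [Real.mul_rpow hKpos.le (by positivity), ← Real.rpow_mul hr.le,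
            show β * p = p * ((N : ℝ) + 1 + d) - d by rw [hβ]; field_simp; ring,
            show (d : ℝ) + α = (d : ℝ) + p * ((N:ℝ) + 1) - σ by rw [hα]; ring]
          push_cast
          ring
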